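/- arXiv:2210.00805 — 4 statements merged into one kernel-verified Lean document; each statement's English description precedes it below -/
import Mathlib

section
/- Let c > 0 and let h : [0,c] → ℝ be a piecewise affine function with finitely many affine pieces. Let t be a positive integer and let A ⊆ ℝ be a Lebesgue measurable set such that for every y ∈ A, the set {x ∈ [0,c] : h(x) = y} has at least t elements. Then c · ‖h'‖_∞ ≥ λ(A) · t, where λ denotes the Lebesgue measure and ‖h'‖_∞ is the essential supremum of |h'|. -/
open MeasureTheory Set

/-- `h` is piecewise affine on `[0,c]` with `P` pieces given by partition points
`x 0 = 0 < x 1 < ... < x P = c`, with slope `a p` and intercept `b p` on the `p`-th piece. -/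
def PiecewiseAffinePartition (h : ℝ → ℝ) (c : ℝ) (P : ℕ) (x a b : ℕ → ℝ) : Prop :=
  x 0 = 0 ∧ x P = c ∧ (∀ p < P, x p < x (p + 1)) ∧
    ∀ p < P, ∀ y ∈ Set.Ioc (x p) (x (p + 1)), h y = a p * y + b p

lemma affine_mem_uIcc (a b u v z : ℝ) (hz : z ∈ Set.Icc u v) :
    a * z + b ∈ Set.uIcc (a * u + b) (a * v + b) := by
  rcases le_total 0 a with ha | ha
  · apply Set.Icc_subset_uIcc
    exact ⟨by nlinarith [hz.1, hz.2], by nlinarith [hz.1, hz.2]⟩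
  · apply Set.Icc_subset_uIcc'
    exact ⟨by nlinarith [hz.1, hz.2], by nlinarith [hz.1, hz.2]⟩

lemma exists_piece (P : ℕ) (x : ℕ → ℝ) (hmono : ∀ p < P, x p < x (p + 1))
    (z : ℝ) (hz1 : x 0 < z) (hz2 : z ≤ x P) :
    ∃ p < P, z ∈ Set.Ioc (x p) (x (p + 1)) := by
  have key : ∀ n ≤ P, z ≤ x n → ∃ p < n, z ∈ Set.Ioc (x p) (x (p + 1)) := by
    intro n
    induction n with
    | zero => intro _ hzn; exact absurd (lt_of_lt_of_le hz1 hzn) (lt_irrefl _)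
    | succ m ih =>
      intro hm hzn
      rcases le_or_gt z (x m) with hle | hlt
      · obtain ⟨p, hp, hmem⟩ := ih (le_of_lt hm) hle
        exact ⟨p, Nat.lt_succ_of_lt hp, hmem⟩
      · exact ⟨m, Nat.lt_succ_self m, hlt, hzn⟩
  exact key P le_rfl hz2

/-- If every `y ∈ A` has at least `t` preimages under `h` in `[0,c]`, then
`c * ‖h'‖_∞ ≥ λ(A) * t`, where `K` bounds the slopes of `h`. -/
theorem crossing_lemma (c : ℝ) (hc : 0 < c) (h : ℝ → ℝ) (P : ℕ) (x a b : ℕ → ℝ)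
    (hpa : PiecewiseAffinePartition h c P x a b)
    (K : ℝ) (hK : ∀ p < P, |a p| ≤ K)
    (t : ℕ) (ht : 0 < t) (A : Set ℝ) (hA : MeasurableSet A)
    (hcard : ∀ y ∈ A, (t : ℕ∞) ≤ {z ∈ Set.Icc (0:ℝ) c | h z = y}.encard) :
    volume A * (t : ENNReal) ≤ ENNReal.ofReal (c * K) := by
  obtain ⟨hx0, hxP, hmono, haff⟩ := hpa
  have hP : 0 < P := by
    by_contra hP0
    push_neg at hP0
    interval_cases P
    · rw [hx0] at hxP; exact absurd hxP.symm (ne_of_gt hc)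
  have hK0 : 0 ≤ K := le_trans (abs_nonneg _) (hK 0 hP)
  -- the intervals `I p` cover the relevant values of `h`
  set I : ℕ → Set ℝ := fun p => Set.uIcc (a p * x p + b p) (a p * x (p + 1) + b p) with hI
  -- bad set of values (finitely many)
  set N : Set ℝ := insert (h 0) (⋃ p ∈ Finset.range P, {b p}) with hN
  have hNfin : N.Finite := by
    apply Set.Finite.insert
    exact Set.Finite.biUnion (Finset.range P).finite_toSet (fun p _ => Set.finite_singleton _)
  have hNnull : volume N = 0 := hNfin.measure_zero _
  set A' : Set ℝ := A \ N with hA'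
  have hA'meas : MeasurableSet A' := hA.diff hNfin.measurableSet
  have hA'vol : volume A' = volume A := measure_diff_null hNnull
  -- the selector function
  have hexists : ∀ z ∈ Set.Icc (0:ℝ) c, z ≠ 0 → ∃ p < P, z ∈ Set.Ioc (x p) (x (p + 1)) := by
    intro z hz hz0
    apply exists_piece P x hmono
    · rw [hx0]; exact lt_of_le_of_ne hz.1 (Ne.symm hz0)
    · rw [hxP]; exact hz.2
  classical
  set f : ℝ → ℕ := fun z =>
    if hz : ∃ p, p < P ∧ z ∈ Set.Ioc (x p) (x (p + 1)) then hz.choose else 0 with hf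
  have hfspec : ∀ z ∈ Set.Icc (0:ℝ) c, z ≠ 0 →
      f z < P ∧ z ∈ Set.Ioc (x (f z)) (x (f z + 1)) := by
    intro z hz hz0
    obtain ⟨p, hp, hmem⟩ := hexists z hz hz0
    have hex : ∃ p, p < P ∧ z ∈ Set.Ioc (x p) (x (p + 1)) := ⟨p, hp, hmem⟩
    simp only [hf, dif_pos hex]
    exact hex.choose_spec
  -- key pointwise bound
  have hpoint : ∀ y ∈ A', (t : ENNReal) ≤
      ∑ p ∈ Finset.range P, (I p).indicator (fun _ => (1 : ENNReal)) y := by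
    intro y hy
    have hyA : y ∈ A := hy.1
    have hyN : y ∉ N := hy.2
    have hyh0 : y ≠ h 0 := fun heq => hyN (by rw [hN, heq]; exact Set.mem_insert _ _)
    have hyb : ∀ p < P, y ≠ b p := by
      intro p hp heq
      apply hyN
      rw [hN]
      refine Set.mem_insert_of_mem _ ?_
      simp only [Set.mem_iUnion]
      exact ⟨p, Finset.mem_range.mpr hp, heq⟩
    set S : Set ℝ := {z ∈ Set.Icc (0:ℝ) c | h z = y} with hS
    have hSprop : ∀ z ∈ S, z ≠ 0 := by
      intro z hz hz0
      exact hyh0 (hz0 ▸ hz.2).symm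
    have hSf : ∀ z ∈ S, f z < P ∧ z ∈ Set.Ioc (x (f z)) (x (f z + 1)) :=
      fun z hz => hfspec z hz.1 (hSprop z hz)
    have hval : ∀ z ∈ S, a (f z) * z + b (f z) = y := by
      intro z hz
      have := haff (f z) (hSf z hz).1 z (hSf z hz).2
      rw [← this]; exact hz.2
    have hinj : Set.InjOn f S := by
      intro z hz z' hz' heq
      have h1 := hval z hz
      have h2 := hval z' hz'
      rw [heq] at h1
      have ha0 : a (f z') ≠ 0 := by
        intro h0
        rw [h0, zero_mul, zero_add] at h2
        exact hyb (f z') (hSf z' hz').1 h2.symm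
      have : a (f z') * z = a (f z') * z' := by linarith
      exact mul_left_cancel₀ ha0 this
    set T : Finset ℕ := (Finset.range P).filter (fun p => y ∈ I p) with hT
    have himg : f '' S ⊆ ↑T := by
      rintro p ⟨z, hz, rfl⟩
      rw [hT]
      simp only [Finset.coe_filter, Finset.mem_range, Set.mem_setOf_eq]
      refine ⟨(hSf z hz).1, ?_⟩
      rw [← hval z hz]
      exact affine_mem_uIcc _ _ _ _ _ (Set.Ioc_subset_Icc_self (hSf z hz).2)
    have hcount : (t : ℕ∞) ≤ (T.card : ℕ∞) := by
      calc (t : ℕ∞) ≤ S.encard := hcard y hyA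
        _ = (f '' S).encard := (hinj.encard_image).symm
        _ ≤ (↑T : Set ℕ).encard := Set.encard_mono himg
        _ = (T.card : ℕ∞) := by rw [Set.encard_coe_eq_coe_finsetCard]
    have hcount' : (t : ℕ) ≤ T.card := by exact_mod_cast hcount
    have hsum : ∑ p ∈ Finset.range P, (I p).indicator (fun _ => (1 : ENNReal)) y
        = (T.card : ENNReal) := by
      rw [hT, Finset.card_filter]
      push_cast
      apply Finset.sum_congr rfl
      intro p _
      by_cases hp : y ∈ I p <;> simp [Set.indicator_apply, hp]
    rw [hsum]
    exact_mod_cast hcount'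
  -- measurability of the sum
  have hImeas : ∀ p, MeasurableSet (I p) := fun p => measurableSet_uIcc
  have hsummeas : Measurable (fun y => ∑ p ∈ Finset.range P,
      (I p).indicator (fun _ => (1 : ENNReal)) y) := by
    apply Finset.measurable_sum
    intro p _
    exact (measurable_const.indicator (hImeas p))
  calc volume A * (t : ENNReal) = (t : ENNReal) * volume A' := by rw [hA'vol, mul_comm]
    _ = ∫⁻ _ in A', (t : ENNReal) ∂volume := by rw [setLIntegral_const, mul_comm]
    _ ≤ ∫⁻ y in A', ∑ p ∈ Finset.range P,
        (I p).indicator (fun _ => (1 : ENNReal)) y ∂volume :=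
        setLIntegral_mono hsummeas hpoint
    _ = ∑ p ∈ Finset.range P, ∫⁻ y in A',
        (I p).indicator (fun _ => (1 : ENNReal)) y ∂volume := by
        rw [lintegral_finset_sum]
        intro p _
        exact measurable_const.indicator (hImeas p)
    _ ≤ ∑ p ∈ Finset.range P, volume (I p) := by
        apply Finset.sum_le_sum
        intro p _
        calc ∫⁻ y in A', (I p).indicator (fun _ => (1 : ENNReal)) y ∂volume
            ≤ ∫⁻ y, (I p).indicator (fun _ => (1 : ENNReal)) y ∂volume :=
              setLIntegral_le_lintegral _ _
          _ = volume (I p) := lintegral_indicator_one (hImeas p)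
    _ ≤ ∑ p ∈ Finset.range P, ENNReal.ofReal (K * (x (p + 1) - x p)) := by
        apply Finset.sum_le_sum
        intro p hp
        rw [hI]
        rw [Real.volume_interval]
        apply ENNReal.ofReal_le_ofReal
        have : a p * x (p + 1) + b p - (a p * x p + b p) = a p * (x (p + 1) - x p) := by ring
        rw [this, abs_mul]
        have hd : 0 ≤ x (p + 1) - x p := le_of_lt (sub_pos.mpr (hmono p (Finset.mem_range.mp hp)))
        rw [abs_of_nonneg hd]
        exact mul_le_mul_of_nonneg_right (hK p (Finset.mem_range.mp hp)) hd
    _ = ENNReal.ofReal (∑ p ∈ Finset.range P, K * (x (p + 1) - x p)) := by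
        rw [ENNReal.ofReal_sum_of_nonneg]
        intro p hp
        have hd : 0 ≤ x (p + 1) - x p := le_of_lt (sub_pos.mpr (hmono p (Finset.mem_range.mp hp)))
        exact mul_nonneg hK0 hd
    _ = ENNReal.ofReal (c * K) := by
        rw [← Finset.mul_sum, Finset.sum_range_sub, hx0, hxP, sub_zero, mul_comm]
end

section
/- Let h be a piecewise affine function on [0,c] with affine pieces I_1, …, I_P (disjoint half-open intervals covering [0,c]), and let t ∈ ℕ and A be a measurable set such that every y ∈ A has at least t preimages under h in [0,c]. Then the sum over p of the Lebesgue measure of h(I_p) is at least t · λ(A). -/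
open MeasureTheory Set

/-- If `h` is affine on disjoint half-open pieces `I_p = (r_p, s_p]` covering `(0,c]`
and every `y ∈ A` has at least `t` preimages under `h` in `[0,c]`, then
`∑_p λ(h(I_p)) ≥ t · λ(A)`. -/
theorem sum_image_measure_ge (c : ℝ) (hc : 0 < c) (h : ℝ → ℝ) (P : ℕ) (r s a b : ℕ → ℝ)
    (hcover : Set.Ioc (0:ℝ) c = ⋃ p ∈ Finset.range P, Set.Ioc (r p) (s p))
    (hdisj : ∀ p < P, ∀ q < P, p ≠ q →
      Disjoint (Set.Ioc (r p) (s p)) (Set.Ioc (r q) (s q)))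
    (haff : ∀ p < P, ∀ y ∈ Set.Ioc (r p) (s p), h y = a p * y + b p)
    (t : ℕ) (A : Set ℝ) (hA : MeasurableSet A)
    (hcard : ∀ y ∈ A, (t : ℕ∞) ≤ {z ∈ Set.Icc (0:ℝ) c | h z = y}.encard) :
    (t : ENNReal) * volume A ≤
      ∑ p ∈ Finset.range P, volume (h '' Set.Ioc (r p) (s p)) := by
  classical
  set E : Set ℝ := {h 0} ∪ ⋃ p ∈ Finset.range P, ({b p} : Set ℝ) with hE
  have hEcount : E.Countable :=
    (Set.countable_singleton _).union
      ((Finset.range P).countable_toSet.biUnion fun p _ => Set.countable_singleton _)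
  have hEmeas : MeasurableSet E := hEcount.measurableSet
  have hEnull : volume E = 0 := hEcount.measure_zero _
  set A' := A \ E with hA'def
  have hA'meas : MeasurableSet A' := hA.diff hEmeas
  have hvol : volume A' = volume A := measure_diff_null hEnull
  -- measurability of each image
  have himg : ∀ p ∈ Finset.range P, MeasurableSet (h '' Set.Ioc (r p) (s p)) := by
    intro p hp
    rw [Finset.mem_range] at hp
    have himeq : h '' Set.Ioc (r p) (s p)
        = (fun x => a p * x + b p) '' Set.Ioc (r p) (s p) :=
      Set.image_congr (fun x hx => haff p hp x hx)
    rw [himeq]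
    by_cases h0 : a p = 0
    · have hsub : ((fun x => a p * x + b p) '' Set.Ioc (r p) (s p)).Subsingleton := by
        rintro x ⟨u, _, rfl⟩ y ⟨v, _, rfl⟩
        simp [h0]
      exact hsub.measurableSet
    · have heq : (fun x => a p * x + b p) '' Set.Ioc (r p) (s p)
          = (fun y => (y - b p) / a p) ⁻¹' Set.Ioc (r p) (s p) := by
        ext y
        constructor
        · rintro ⟨x, hx, rfl⟩
          simp only [Set.mem_preimage, add_sub_cancel_right,
            mul_div_cancel_left₀ _ h0]
          exact hx
        · intro hy
          exact ⟨(y - b p) / a p, hy, by field_simp; ring⟩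
      rw [heq]
      exact (measurable_id.sub_const (b p)).div_const (a p) measurableSet_Ioc
  -- counting bound
  have hcount : ∀ y ∈ A', (t : ENNReal)
      ≤ ∑ p ∈ Finset.range P, (h '' Set.Ioc (r p) (s p)).indicator 1 y := by
    intro y hy
    obtain ⟨hyA, hyE⟩ := hy
    set T := (Finset.range P).filter (fun p => y ∈ h '' Set.Ioc (r p) (s p)) with hT
    have hsum : ∑ p ∈ Finset.range P, (h '' Set.Ioc (r p) (s p)).indicator 1 y
        = (T.card : ENNReal) := by
      rw [hT, ← Finset.sum_boole]
      refine Finset.sum_congr rfl fun p hp => ?_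
      simp [Set.indicator_apply]
    rw [hsum]
    have hsubset : {z ∈ Set.Icc (0:ℝ) c | h z = y}
        ⊆ (fun p => (y - b p) / a p) '' (T : Set ℕ) := by
      rintro z ⟨hz, hzy⟩
      have hz0 : z ≠ 0 := by
        rintro rfl
        exact hyE (Or.inl (by simp [hzy.symm]))
      have hzIoc : z ∈ Set.Ioc (0:ℝ) c := ⟨lt_of_le_of_ne hz.1 (Ne.symm hz0), hz.2⟩
      rw [hcover] at hzIoc
      simp only [Set.mem_iUnion] at hzIoc
      obtain ⟨p, hp, hzp⟩ := hzIoc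
      rw [Finset.mem_range] at hp
      have hval : a p * z + b p = y := (haff p hp z hzp).symm.trans hzy
      have ha0 : a p ≠ 0 := by
        rintro h0
        apply hyE
        right
        simp only [Set.mem_iUnion]
        exact ⟨p, Finset.mem_range.2 hp, by simp [← hval, h0]⟩
      refine ⟨p, ?_, ?_⟩
      · simp only [hT, Finset.coe_filter, Set.mem_setOf_eq]
        exact ⟨Finset.mem_range.2 hp, ⟨z, hzp, hzy⟩⟩
      · field_simp
        linarith
    have hle : (t : ℕ∞) ≤ (T.card : ℕ∞) := by
      calc (t : ℕ∞) ≤ {z ∈ Set.Icc (0:ℝ) c | h z = y}.encard := hcard y hyA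
        _ ≤ ((fun p => (y - b p) / a p) '' (T : Set ℕ)).encard := Set.encard_mono hsubset
        _ ≤ (T : Set ℕ).encard := Set.encard_image_le _ _
        _ = (T.card : ℕ∞) := Set.encard_coe_eq_coe_finsetCard T
    have : t ≤ T.card := by exact_mod_cast hle
    exact_mod_cast Nat.cast_le.2 this
  calc (t : ENNReal) * volume A = (t : ENNReal) * volume A' := by rw [hvol]
    _ = ∫⁻ y, A'.indicator (fun _ => (t : ENNReal)) y := by
        rw [lintegral_indicator_const hA'meas]
    _ ≤ ∫⁻ y, ∑ p ∈ Finset.range P, (h '' Set.Ioc (r p) (s p)).indicator 1 y := by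
        refine lintegral_mono fun y => ?_
        by_cases hy : y ∈ A'
        · simpa [Set.indicator_of_mem hy] using hcount y hy
        · simp [Set.indicator_of_notMem hy]
    _ = ∑ p ∈ Finset.range P, ∫⁻ y, (h '' Set.Ioc (r p) (s p)).indicator 1 y := by
        refine lintegral_finset_sum _ fun p hp => ?_
        exact measurable_one.indicator (himg p hp)
    _ = ∑ p ∈ Finset.range P, volume (h '' Set.Ioc (r p) (s p)) := by
        refine Finset.sum_congr rfl fun p hp => ?_
        exact lintegral_indicator_one (himg p hp)
end

section
/- Let f : ℝ → ℝ^q be piecewise affine with at most r affine pieces along a line segment κ, and let g : ℝ^q → ℝ^p be a function that is piecewise affine with at most s affine pieces along every line. Then g ∘ f restricted to κ has at most r·s affine pieces. -/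
open Set

/-- `f` has at most `P` affine pieces on `Ω'`: there are `P` open sets whose closures
cover the space and on (the intersection of `Ω'` with) each of which `f` is affine. -/
def PiecesLE {E F : Type*} [NormedAddCommGroup E] [NormedSpace ℝ E]
    [AddCommGroup F] [Module ℝ F] (f : E → F) (Ω' : Set E) (P : ℕ) : Prop :=
  ∃ U : Fin P → Set E, (∀ i, IsOpen (U i)) ∧ (⋃ i, closure (U i)) = Set.univ ∧
    ∀ i, ∃ (A : E →ₗ[ℝ] F) (b : F), ∀ x ∈ Ω' ∩ U i, f x = A x + b

/-- If `f : ℝ → ℝ^q` has at most `r` affine pieces on the segment `κ = [κa, κb]` and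
`g : ℝ^q → ℝ^p` has at most `s` affine pieces along every line, then `g ∘ f` has at most
`r·s` affine pieces on `κ`. -/
theorem pieces_comp_le (q p r s : ℕ) (κa κb : ℝ)
    (f : ℝ → (Fin q → ℝ)) (g : (Fin q → ℝ) → (Fin p → ℝ))
    (hf : PiecesLE f (Set.Icc κa κb) r)
    (hg : ∀ v w : Fin q → ℝ, PiecesLE (fun t : ℝ => g (t • v + w)) Set.univ s) :
    PiecesLE (g ∘ f) (Set.Icc κa κb) (r * s) := by
  obtain ⟨U, hUopen, hUcl, hUaff⟩ := hf
  choose A b hAb using hUaff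
  choose V hVopen hVcl hVaff using fun i => hg (A i 1) (b i)
  choose B c hBc using fun i => hVaff i
  refine ⟨fun k => U (finProdFinEquiv.symm k).1 ∩
      V (finProdFinEquiv.symm k).1 (finProdFinEquiv.symm k).2, ?_, ?_, ?_⟩
  · intro k
    exact (hUopen _).inter (hVopen _ _)
  · apply Set.eq_univ_of_forall
    intro x
    by_contra hx
    simp only [Set.mem_iUnion, not_exists] at hx
    -- the complement of the union of all the closures is an open nbhd of x
    set N : Set ℝ := (⋃ k : Fin (r * s), closure (U (finProdFinEquiv.symm k).1 ∩
      V (finProdFinEquiv.symm k).1 (finProdFinEquiv.symm k).2))ᶜ with hN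
    have hNopen : IsOpen N := by
      apply isOpen_compl_iff.mpr
      exact isClosed_iUnion_of_finite fun k => isClosed_closure
    have hxN : x ∈ N := by
      simp only [hN, Set.mem_compl_iff, Set.mem_iUnion, not_exists]
      exact hx
    -- x is in the closure of some U i
    have : x ∈ ⋃ i, closure (U i) := hUcl ▸ Set.mem_univ x
    obtain ⟨i, hi⟩ := Set.mem_iUnion.mp this
    obtain ⟨y, hyN, hyU⟩ := (mem_closure_iff.mp hi) N hNopen hxN
    -- y is in the closure of some V i j
    have : y ∈ ⋃ j, closure (V i j) := (hVcl i) ▸ Set.mem_univ y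
    obtain ⟨j, hj⟩ := Set.mem_iUnion.mp this
    obtain ⟨z, ⟨hzN, hzU⟩, hzV⟩ :=
      (mem_closure_iff.mp hj) (N ∩ U i) (hNopen.inter (hUopen i)) ⟨hyN, hyU⟩
    -- z contradicts membership in N
    apply hzN
    refine Set.mem_iUnion.mpr ⟨finProdFinEquiv (i, j), ?_⟩
    have he : finProdFinEquiv.symm (finProdFinEquiv (i, j)) = (i, j) :=
      Equiv.symm_apply_apply _ _
    rw [he]
    exact subset_closure ⟨hzU, hzV⟩
  · intro k
    set i := (finProdFinEquiv.symm k).1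
    set j := (finProdFinEquiv.symm k).2
    refine ⟨B i j, c i j, ?_⟩
    rintro x ⟨hx, hxU, hxV⟩
    have hfx : f x = x • A i 1 + b i := by
      rw [hAb i x ⟨hx, hxU⟩]
      congr 1
      have : (x : ℝ) • (1 : ℝ) = x := by simp
      rw [← this, map_smul]
      simp
    have := hBc i j x ⟨Set.mem_univ x, hxV⟩
    simp only [Function.comp_apply, hfx]
    exact this
end

section
/- Let λ > 1 and L ≥ 2, and define matrices A_1 = ((1+ε)λ, λ)^T ∈ ℝ^{2×1}, A_j = diag(λ, λ) ∈ ℝ^{2×2} for 2 ≤ j ≤ L−1, and A_L = ((1+λ^{−L})λ, −λ) ∈ ℝ^{1×2}, where ε ≥ 0 perturbs only the first entry of A_1. Then for every x ∈ ℝ, the product A_L A_{L−1} ⋯ A_1 x equals (1 + ε(1+λ^L)) x; in particular, the output error relative to the unperturbed case (ε = 0) is ε(1+λ^L)·x. -/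
/-- For `λ > 1`, `L ≥ 2` and a relative perturbation `ε ≥ 0` of the first entry of `A_1`,
the product `A_L A_{L-1} ⋯ A_1` equals multiplication by `1 + ε(1 + λ^L)`; in particular
the error relative to the unperturbed case is `ε(1 + λ^L)·x`. -/
theorem perturbed_matrix_product (l ε : ℝ) (hl : 1 < l) (hε : 0 ≤ ε)
    (L : ℕ) (hL : 2 ≤ L) :
    ((!![(1 + (l ^ L)⁻¹) * l, -l] : Matrix (Fin 1) (Fin 2) ℝ) *
        (!![l, 0; 0, l] : Matrix (Fin 2) (Fin 2) ℝ) ^ (L - 2) *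
        (!![(1 + ε) * l; l] : Matrix (Fin 2) (Fin 1) ℝ)
      = !![1 + ε * (1 + l ^ L)]) ∧
    ∀ x : ℝ,
      ((!![(1 + (l ^ L)⁻¹) * l, -l] : Matrix (Fin 1) (Fin 2) ℝ) *
          (!![l, 0; 0, l] : Matrix (Fin 2) (Fin 2) ℝ) ^ (L - 2) *
          (!![(1 + ε) * l; l] : Matrix (Fin 2) (Fin 1) ℝ)).mulVec (fun _ => x) 0
        - x = ε * (1 + l ^ L) * x := by
  have hl0 : l ≠ 0 := by positivity
  have hlL : l ^ L ≠ 0 := pow_ne_zero _ hl0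
  have hd : (!![l, 0; 0, l] : Matrix (Fin 2) (Fin 2) ℝ) = l • (1 : Matrix (Fin 2) (Fin 2) ℝ) := by
    ext i j
    fin_cases i <;> fin_cases j <;> simp [Matrix.one_apply]
  have hpow : (!![l, 0; 0, l] : Matrix (Fin 2) (Fin 2) ℝ) ^ (L - 2)
      = (l ^ (L - 2)) • (1 : Matrix (Fin 2) (Fin 2) ℝ) := by
    rw [hd, smul_pow, one_pow]
  have hLL : l ^ (L - 2) * (l * l) = l ^ L := by
    have : l ^ (L - 2) * l ^ 2 = l ^ L := by
      rw [← pow_add, Nat.sub_add_cancel hL]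
    rw [← this]; ring
  have hscal : l ^ (L - 2) * ((1 + (l ^ L)⁻¹) * l * ((1 + ε) * l) + -l * l)
      = 1 + ε * (1 + l ^ L) := by
    have h1 : (l ^ L) * (l ^ L)⁻¹ = 1 := mul_inv_cancel₀ hlL
    have h2 : l ^ (L - 2) * ((1 + (l ^ L)⁻¹) * l * ((1 + ε) * l) + -l * l)
        = l ^ L * ((1 + (l ^ L)⁻¹) * (1 + ε) - 1) := by
      rw [← hLL]; ring
    rw [h2]
    linear_combination (1 + ε) * h1
  have hmain : ((!![(1 + (l ^ L)⁻¹) * l, -l] : Matrix (Fin 1) (Fin 2) ℝ) *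
        (!![l, 0; 0, l] : Matrix (Fin 2) (Fin 2) ℝ) ^ (L - 2) *
        (!![(1 + ε) * l; l] : Matrix (Fin 2) (Fin 1) ℝ)
      = !![1 + ε * (1 + l ^ L)]) := by
    rw [hpow, Matrix.mul_smul, Matrix.mul_one, Matrix.smul_mul]
    ext i j
    fin_cases i <;> fin_cases j
    simp [Matrix.mul_apply, Fin.sum_univ_succ]
    linarith [hscal]
  refine ⟨hmain, fun x => ?_⟩
  rw [hmain]
  simp [Matrix.mulVec, dotProduct, Fin.sum_univ_succ]
  ring
end
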